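/- With the matrix M(x,y,z) of the tetrahedron configuration (rows v₁,…,v₄ as above, μᵢⱼ ∈ (0,4), x,y,z > 0) and R_Γ defined as the logarithmic cross-ratio invariant of each of the four vertex 3-circuits, one has R_{Γ₁} = −2 log(xyz), R_{Γ₂} = 2 log z, R_{Γ₃} = 2 log y, R_{Γ₄} = 2 log x; consequently the map (x,y,z) ∈ (0,∞)³ ↦ (R_{Γ₁}, R_{Γ₂}, R_{Γ₃}, R_{Γ₄}) is a bijection onto the hyperplane {(r₁,r₂,r₃,r₄) ∈ ℝ⁴ : r₁+r₂+r₃+r₄ = 0}. -/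

import Mathlib

open Real Set

/-- Rows of the mirror tetrahedron matrix: row `i` is the polar vector `vᵢ`. -/
noncomputable def tetraV (m12 m13 m14 m23 m24 m34 x y z : ℝ) :
    Matrix (Fin 4) (Fin 4) ℝ :=
  !![-2, Real.sqrt m12, Real.sqrt m13, Real.sqrt m14;
     Real.sqrt m12, -2, Real.sqrt m23 * x, Real.sqrt m24 / y;
     Real.sqrt m13, Real.sqrt m23 / x, -2, Real.sqrt m34 * z;
     Real.sqrt m14, Real.sqrt m24 * y, Real.sqrt m34 / z, -2]

/-- The invariant `R_{(i,j,k)}` where `αᵢ(v) = -(v i)`: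
`R = log((αᵢ(vⱼ)·αⱼ(v_k)·α_k(vᵢ)) / (αᵢ(v_k)·α_k(vⱼ)·αⱼ(vᵢ)))`. -/
noncomputable def tetraR (v : Matrix (Fin 4) (Fin 4) ℝ) (i j k : Fin 4) : ℝ :=
  Real.log (((-(v j i)) * (-(v k j)) * (-(v i k)))
    / ((-(v k i)) * (-(v j k)) * (-(v i j))))


theorem tetra_R_parametrization
    (m12 m13 m14 m23 m24 m34 : ℝ)
    (h12 : m12 ∈ Set.Ioo (0 : ℝ) 4) (h13 : m13 ∈ Set.Ioo (0 : ℝ) 4)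
    (h14 : m14 ∈ Set.Ioo (0 : ℝ) 4) (h23 : m23 ∈ Set.Ioo (0 : ℝ) 4)
    (h24 : m24 ∈ Set.Ioo (0 : ℝ) 4) (h34 : m34 ∈ Set.Ioo (0 : ℝ) 4) :
    (∀ x y z : ℝ, 0 < x → 0 < y → 0 < z →
      tetraR (tetraV m12 m13 m14 m23 m24 m34 x y z) 1 2 3
          = -2 * Real.log (x * y * z) ∧
      tetraR (tetraV m12 m13 m14 m23 m24 m34 x y z) 0 3 2 = 2 * Real.log z ∧
      tetraR (tetraV m12 m13 m14 m23 m24 m34 x y z) 0 1 3 = 2 * Real.log y ∧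
      tetraR (tetraV m12 m13 m14 m23 m24 m34 x y z) 0 2 1 = 2 * Real.log x) ∧
    Set.BijOn
      (fun q : ℝ × ℝ × ℝ =>
        ![tetraR (tetraV m12 m13 m14 m23 m24 m34 q.1 q.2.1 q.2.2) 1 2 3,
          tetraR (tetraV m12 m13 m14 m23 m24 m34 q.1 q.2.1 q.2.2) 0 3 2,
          tetraR (tetraV m12 m13 m14 m23 m24 m34 q.1 q.2.1 q.2.2) 0 1 3,
          tetraR (tetraV m12 m13 m14 m23 m24 m34 q.1 q.2.1 q.2.2) 0 2 1])
      (Set.Ioi 0 ×ˢ Set.Ioi 0 ×ˢ Set.Ioi 0)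
      {r : Fin 4 → ℝ | r 0 + r 1 + r 2 + r 3 = 0} := by
  have s12 := Real.sqrt_pos.2 h12.1
  have s13 := Real.sqrt_pos.2 h13.1
  have s14 := Real.sqrt_pos.2 h14.1
  have s23 := Real.sqrt_pos.2 h23.1
  have s24 := Real.sqrt_pos.2 h24.1
  have s34 := Real.sqrt_pos.2 h34.1
  have key : ∀ x y z : ℝ, 0 < x → 0 < y → 0 < z →
      tetraR (tetraV m12 m13 m14 m23 m24 m34 x y z) 1 2 3
          = -2 * Real.log (x * y * z) ∧
      tetraR (tetraV m12 m13 m14 m23 m24 m34 x y z) 0 3 2 = 2 * Real.log z ∧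
      tetraR (tetraV m12 m13 m14 m23 m24 m34 x y z) 0 1 3 = 2 * Real.log y ∧
      tetraR (tetraV m12 m13 m14 m23 m24 m34 x y z) 0 2 1 = 2 * Real.log x := by
    intro x y z hx hy hz
    have hxyz : (0:ℝ) < x * y * z := by positivity
    refine ⟨?_, ?_, ?_, ?_⟩ <;>
      simp only [tetraR, tetraV, Matrix.cons_val_zero, Matrix.cons_val_one,
        Matrix.head_cons, Matrix.cons_val_two, Matrix.tail_cons,
        Matrix.cons_val_three, Matrix.of_apply, Matrix.head_fin_const]
    · rw [show (-(Real.sqrt m23 / x) * -(Real.sqrt m34 / z) * -(Real.sqrt m24 / y)) /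
          (-(Real.sqrt m24 * y) * -(Real.sqrt m34 * z) * -(Real.sqrt m23 * x))
          = ((x * y * z) * (x * y * z))⁻¹ by field_simp]
      rw [Real.log_inv, Real.log_mul hxyz.ne' hxyz.ne']; ring
    · rw [show (-Real.sqrt m14 * -(Real.sqrt m34 * z) * -Real.sqrt m13) /
          (-Real.sqrt m13 * -(Real.sqrt m34 / z) * -Real.sqrt m14) = z * z by
        field_simp]
      rw [Real.log_mul hz.ne' hz.ne']; ring
    · rw [show (-Real.sqrt m12 * -(Real.sqrt m24 * y) * -Real.sqrt m14) /
          (-Real.sqrt m14 * -(Real.sqrt m24 / y) * -Real.sqrt m12) = y * y by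
        field_simp]
      rw [Real.log_mul hy.ne' hy.ne']; ring
    · rw [show (-Real.sqrt m13 * -(Real.sqrt m23 * x) * -Real.sqrt m12) /
          (-Real.sqrt m12 * -(Real.sqrt m23 / x) * -Real.sqrt m13) = x * x by
        field_simp]
      rw [Real.log_mul hx.ne' hx.ne']; ring
  refine ⟨key, ?_, ?_, ?_⟩
  · rintro ⟨x, y, z⟩ ⟨hx, hy, hz⟩
    rw [Set.mem_Ioi] at hx hy hz
    obtain ⟨k1, k2, k3, k4⟩ := key x y z hx hy hz
    simp only [Set.mem_setOf_eq, Matrix.cons_val_zero, Matrix.cons_val_one,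
      Matrix.head_cons, Matrix.cons_val_two, Matrix.tail_cons, Matrix.cons_val_three]
    rw [k1, k2, k3, k4, Real.log_mul (by positivity) hz.ne',
      Real.log_mul hx.ne' hy.ne']
    ring
  · rintro ⟨x, y, z⟩ ⟨hx, hy, hz⟩ ⟨x', y', z'⟩ ⟨hx', hy', hz'⟩ h
    obtain ⟨_, k2, k3, k4⟩ := key x y z hx hy hz
    obtain ⟨_, k2', k3', k4'⟩ := key x' y' z' hx' hy' hz'
    simp only at h
    have e1 := congrFun h 1
    have e2 := congrFun h 2
    have e3 := congrFun h 3
    simp only [Matrix.cons_val_one, Matrix.head_cons, Matrix.cons_val_two,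
      Matrix.tail_cons, Matrix.cons_val_three, Matrix.cons_val_zero] at e1 e2 e3
    rw [k2, k2'] at e1
    rw [k3, k3'] at e2
    rw [k4, k4'] at e3
    have hzz : z = z' := Real.log_injOn_pos hz hz' (by linarith)
    have hyy : y = y' := Real.log_injOn_pos hy hy' (by linarith)
    have hxx : x = x' := Real.log_injOn_pos hx hx' (by linarith)
    simp [hxx, hyy, hzz]
  · rintro r hr
    refine ⟨(Real.exp (r 3 / 2), Real.exp (r 2 / 2), Real.exp (r 1 / 2)),
      ⟨Real.exp_pos _, Real.exp_pos _, Real.exp_pos _⟩, ?_⟩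
    obtain ⟨k1, k2, k3, k4⟩ := key _ _ _ (Real.exp_pos (r 3 / 2))
      (Real.exp_pos (r 2 / 2)) (Real.exp_pos (r 1 / 2))
    simp only [Set.mem_setOf_eq] at hr
    simp only []
    rw [show tetraR (tetraV m12 m13 m14 m23 m24 m34 (Real.exp (r 3 / 2))
        (Real.exp (r 2 / 2)) (Real.exp (r 1 / 2))) 1 2 3 = r 0 by
      rw [k1, ← Real.exp_add, ← Real.exp_add, Real.log_exp]; linarith]
    rw [show tetraR (tetraV m12 m13 m14 m23 m24 m34 (Real.exp (r 3 / 2))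
        (Real.exp (r 2 / 2)) (Real.exp (r 1 / 2))) 0 3 2 = r 1 by
      rw [k2, Real.log_exp]; ring]
    rw [show tetraR (tetraV m12 m13 m14 m23 m24 m34 (Real.exp (r 3 / 2))
        (Real.exp (r 2 / 2)) (Real.exp (r 1 / 2))) 0 1 3 = r 2 by
      rw [k3, Real.log_exp]; ring]
    rw [show tetraR (tetraV m12 m13 m14 m23 m24 m34 (Real.exp (r 3 / 2))
        (Real.exp (r 2 / 2)) (Real.exp (r 1 / 2))) 0 2 1 = r 3 by
      rw [k4, Real.log_exp]; ring]
    funext i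
    fin_cases i <;> rfl
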